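/- A nonconforming method is quasi-optimal if and only if it is fully algebraically consistent and fully stable. Precisely: the linear map P : V → X (with range in S) satisfies an estimate ‖v − P v‖ ≤ C · dist(v,S) for all v ∈ V and some constant C if and only if P is bounded and P u = u for every u ∈ V ∩ S. -/

import Mathlib

open Metric

section Aux

variable {X : Type*} [NormedAddCommGroup X] [NormedSpace ℝ X] [CompleteSpace X]

/-- Key comparison: if `X = V ⊔ S` with `V` complete and `S` finite-dimensional, then the
quotient norm of `v` in `V ⧸ (S.comap V.subtype)` is controlled by `dist(v, S)`. -/
theorem exists_quot_norm_le_infDist (V S : Submodule ℝ X) [CompleteSpace V]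
    [FiniteDimensional ℝ S] (hsum : V ⊔ S = ⊤) :
    ∃ c : ℝ, 0 ≤ c ∧ ∀ v : V,
      ‖(Submodule.Quotient.mk v : V ⧸ S.comap V.subtype)‖ ≤
        c * Metric.infDist (v : X) (S : Set X) := by
  haveI hSc : IsClosed (S : Set X) := S.closed_of_finiteDimensional
  set U : Submodule ℝ V := S.comap V.subtype with hU
  haveI hUc : IsClosed (U : Set V) := by
    have : (U : Set V) = (Subtype.val : V → X) ⁻¹' (S : Set X) := rfl
    rw [this]
    exact hSc.preimage continuous_subtype_val
  -- the linear map V ⧸ U → X ⧸ S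
  set f₀ : V →ₗ[ℝ] X ⧸ S := S.mkQ ∘ₗ V.subtype with hf₀
  have hker : U ≤ LinearMap.ker f₀ := by
    intro u hu
    simp only [LinearMap.mem_ker, hf₀, LinearMap.comp_apply, Submodule.subtype_apply,
      Submodule.mkQ_apply]
    exact (Submodule.Quotient.mk_eq_zero S).2 hu
  set f₁ : V ⧸ U →ₗ[ℝ] X ⧸ S := U.liftQ f₀ hker with hf₁
  have hf₁mk : ∀ v : V, f₁ (Submodule.Quotient.mk v) = Submodule.Quotient.mk (v : X) := by
    intro v; rfl
  have hbound : ∀ q : V ⧸ U, ‖f₁ q‖ ≤ 1 * ‖q‖ := by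
    intro q
    rw [one_mul]
    refine le_of_forall_pos_le_add fun ε hε => ?_
    obtain ⟨m, hm, hmlt⟩ := Submodule.Quotient.norm_mk_lt q hε
    calc ‖f₁ q‖ = ‖(Submodule.Quotient.mk (m : X) : X ⧸ S)‖ := by rw [← hm, hf₁mk]
      _ ≤ ‖(m : X)‖ := Submodule.Quotient.norm_mk_le S (m : X)
      _ = ‖m‖ := rfl
      _ ≤ ‖q‖ + ε := hmlt.le
  set f : (V ⧸ U) →L[ℝ] (X ⧸ S) := f₁.mkContinuous 1 hbound with hf
  have hfmk : ∀ v : V, f (Submodule.Quotient.mk v) = Submodule.Quotient.mk (v : X) := hf₁mk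
  have hinj : LinearMap.ker (f : (V ⧸ U) →ₗ[ℝ] (X ⧸ S)) = ⊥ := by
    apply LinearMap.ker_eq_bot_of_injective
    intro q₁ q₂ hq
    obtain ⟨v₁, rfl⟩ := Submodule.Quotient.mk_surjective U q₁
    obtain ⟨v₂, rfl⟩ := Submodule.Quotient.mk_surjective U q₂
    rw [ContinuousLinearMap.coe_coe, hfmk, hfmk] at hq
    rw [Submodule.Quotient.eq] at hq ⊢
    exact hq
  have hsurj : LinearMap.range (f : (V ⧸ U) →ₗ[ℝ] (X ⧸ S)) = ⊤ := by
    rw [LinearMap.range_eq_top]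
    intro y
    obtain ⟨x, rfl⟩ := Submodule.Quotient.mk_surjective S y
    have hx : x ∈ V ⊔ S := hsum ▸ Submodule.mem_top
    obtain ⟨v, hv, s, hs, rfl⟩ := Submodule.mem_sup.1 hx
    refine ⟨Submodule.Quotient.mk ⟨v, hv⟩, ?_⟩
    rw [ContinuousLinearMap.coe_coe, hfmk]
    rw [Submodule.Quotient.eq]
    simpa using S.neg_mem hs
  set e := ContinuousLinearEquiv.ofBijective f hinj hsurj with he
  set c : ℝ := ‖(e.symm : (X ⧸ S) →L[ℝ] (V ⧸ U))‖ with hc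
  refine ⟨c, norm_nonneg _, fun v => ?_⟩
  have h1 : ‖(Submodule.Quotient.mk v : V ⧸ U)‖ ≤
      c * ‖(Submodule.Quotient.mk (v : X) : X ⧸ S)‖ := by
    have := (e.symm : (X ⧸ S) →L[ℝ] (V ⧸ U)).le_opNorm
      (Submodule.Quotient.mk (v : X) : X ⧸ S)
    have heq : e.symm (Submodule.Quotient.mk (v : X) : X ⧸ S) =
        (Submodule.Quotient.mk v : V ⧸ U) := by
      rw [← hfmk v]
      exact e.symm_apply_apply _
    rw [ContinuousLinearEquiv.coe_coe, heq] at this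
    exact this
  have h2 : ‖(Submodule.Quotient.mk (v : X) : X ⧸ S)‖ ≤
      Metric.infDist (v : X) (S : Set X) := by
    by_contra h
    push_neg at h
    obtain ⟨s, hs, hds⟩ := (Metric.infDist_lt_iff ⟨0, S.zero_mem⟩).1 h
    have : ‖(Submodule.Quotient.mk (v : X) : X ⧸ S)‖ ≤ ‖(v : X) - s‖ := by
      have hmk : (Submodule.Quotient.mk ((v : X) - s) : X ⧸ S) =
          Submodule.Quotient.mk (v : X) := by
        rw [Submodule.Quotient.eq]
        simpa using S.neg_mem hs
      rw [← hmk]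
      exact Submodule.Quotient.norm_mk_le S _
    rw [dist_eq_norm] at hds
    linarith
  calc ‖(Submodule.Quotient.mk v : V ⧸ U)‖ ≤ c * ‖(Submodule.Quotient.mk (v : X) : X ⧸ S)‖ := h1
    _ ≤ c * Metric.infDist (v : X) (S : Set X) :=
      mul_le_mul_of_nonneg_left h2 (norm_nonneg _)

end Aux

/-- **Characterization of quasi-optimality.** A nonconforming method is quasi-optimal
if and only if it is fully algebraically consistent and fully stable: the linear map
`P : V → X` with range in `S` satisfies `‖v − P v‖ ≤ C · dist(v,S)` for all `v ∈ V`
and some constant `C` iff `P` is bounded and `P u = u` for every `u ∈ V ∩ S`. -/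
theorem quasiOptimal_iff_consistent_and_stable
    {X : Type*} [NormedAddCommGroup X] [InnerProductSpace ℝ X] [CompleteSpace X]
    (V S : Submodule ℝ X) [CompleteSpace V] [FiniteDimensional ℝ S]
    (hSne : S ≠ ⊥) (hsum : V ⊔ S = ⊤)
    (P : V →ₗ[ℝ] X) (hrange : ∀ v : V, P v ∈ S) :
    (∃ C : ℝ, ∀ v : V, ‖(v : X) - P v‖ ≤ C * Metric.infDist (v : X) (S : Set X)) ↔
      ((∃ C : ℝ, ∀ v : V, ‖P v‖ ≤ C * ‖(v : X)‖) ∧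
        ∀ u : V, (u : X) ∈ S → P u = (u : X)) := by
  constructor
  · rintro ⟨C, hC⟩
    constructor
    · -- boundedness
      refine ⟨1 + max C 0, fun v => ?_⟩
      have hdist : Metric.infDist (v : X) (S : Set X) ≤ ‖(v : X)‖ := by
        have := Metric.infDist_le_dist_of_mem (x := (v : X)) (S.zero_mem)
        simpa [dist_eq_norm] using this
      have h1 : ‖(v : X) - P v‖ ≤ max C 0 * ‖(v : X)‖ := by
        calc ‖(v : X) - P v‖ ≤ C * Metric.infDist (v : X) (S : Set X) := hC v
          _ ≤ max C 0 * Metric.infDist (v : X) (S : Set X) :=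
            mul_le_mul_of_nonneg_right (le_max_left _ _) Metric.infDist_nonneg
          _ ≤ max C 0 * ‖(v : X)‖ := mul_le_mul_of_nonneg_left hdist (le_max_right _ _)
      calc ‖P v‖ = ‖(v : X) - ((v : X) - P v)‖ := by rw [sub_sub_cancel]
        _ ≤ ‖(v : X)‖ + ‖(v : X) - P v‖ := norm_sub_le _ _
        _ ≤ ‖(v : X)‖ + max C 0 * ‖(v : X)‖ := by linarith
        _ = (1 + max C 0) * ‖(v : X)‖ := by ring
    · -- consistency
      intro u hu
      have := hC u
      rw [Metric.infDist_zero_of_mem hu, mul_zero] at this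
      have : (u : X) - P u = 0 := norm_le_zero_iff.1 this
      exact (sub_eq_zero.1 this).symm
  · rintro ⟨⟨C, hC⟩, hcons⟩
    obtain ⟨c, hc0, hkey⟩ := exists_quot_norm_le_infDist V S hsum
    set C' : ℝ := max C 0 with hC'
    have hC'0 : 0 ≤ C' := le_max_right _ _
    have hC'b : ∀ v : V, ‖P v‖ ≤ C' * ‖(v : X)‖ := fun v =>
      (hC v).trans (mul_le_mul_of_nonneg_right (le_max_left _ _) (norm_nonneg _))
    refine ⟨(1 + C') * c, fun v => ?_⟩
    set U : Submodule ℝ V := S.comap V.subtype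
    have step1 : ‖(v : X) - P v‖ ≤ (1 + C') * ‖(Submodule.Quotient.mk v : V ⧸ U)‖ := by
      refine le_of_forall_pos_le_add fun ε hε => ?_
      have h1C' : (0 : ℝ) < 1 + C' := by linarith
      obtain ⟨m, hm, hmlt⟩ := Submodule.Quotient.norm_mk_lt
        (Submodule.Quotient.mk v : V ⧸ U) (div_pos hε h1C')
      have hmem : ((v - m : V) : X) ∈ S := by
        rw [Submodule.Quotient.eq] at hm
        simpa using S.neg_mem hm
      have hPu : P (v - m) = ((v - m : V) : X) := hcons _ hmem
      have hsplit : (v : X) - P v = (m : X) - P m := by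
        have : P v = P (v - m) + P m := by rw [← map_add, sub_add_cancel]
        rw [this, hPu]
        push_cast
        abel
      calc ‖(v : X) - P v‖ = ‖(m : X) - P m‖ := by rw [hsplit]
        _ ≤ ‖(m : X)‖ + ‖P m‖ := norm_sub_le _ _
        _ ≤ ‖m‖ + C' * ‖m‖ := by
          have hnm : ‖(m : X)‖ = ‖m‖ := rfl
          rw [← hnm]; linarith [hC'b m]
        _ = (1 + C') * ‖m‖ := by ring
        _ ≤ (1 + C') * (‖(Submodule.Quotient.mk v : V ⧸ U)‖ + ε / (1 + C')) :=
          mul_le_mul_of_nonneg_left hmlt.le h1C'.le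
        _ = (1 + C') * ‖(Submodule.Quotient.mk v : V ⧸ U)‖ + ε := by
          rw [mul_add, mul_div_cancel₀ _ (ne_of_gt h1C')]
    calc ‖(v : X) - P v‖ ≤ (1 + C') * ‖(Submodule.Quotient.mk v : V ⧸ U)‖ := step1
      _ ≤ (1 + C') * (c * Metric.infDist (v : X) (S : Set X)) :=
        mul_le_mul_of_nonneg_left (hkey v) (by linarith)
      _ = (1 + C') * c * Metric.infDist (v : X) (S : Set X) := by ring
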